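/- Let (Ω, G, P) be a probability space and B ⊆ L⁰₊ a convex set. If every sequence in B has a subsequence whose Cesàro means converge in probability to some finite nonnegative random variable, then B is bounded in probability. -/

import Mathlib

open MeasureTheory Filter Topology

/-- If a convex set `B` of nonnegative random variables has the Banach–Saks property with
respect to convergence in probability (every sequence in `B` has a subsequence whose
Cesàro means converge in measure to a finite nonnegative random variable), then `B` is
bounded in probability. -/
theorem banachSaks_implies_boundedInProbability {Ω : Type*} [MeasurableSpace Ω]
    (μ : Measure Ω) [IsProbabilityMeasure μ]
    (B : Set (Ω → ℝ))
    (hmeas : ∀ X ∈ B, Measurable X)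
    (hpos : ∀ X ∈ B, ∀ᵐ ω ∂μ, 0 ≤ X ω)
    (hconv : Convex ℝ B)
    (hBS : ∀ Xs : ℕ → Ω → ℝ, (∀ n, Xs n ∈ B) →
      ∃ φ : ℕ → ℕ, StrictMono φ ∧ ∃ X : Ω → ℝ, (∀ᵐ ω ∂μ, 0 ≤ X ω) ∧
        TendstoInMeasure μ
          (fun k ω => (∑ l ∈ Finset.range (k + 1), Xs (φ l) ω) / (k + 1 : ℝ))
          atTop X) :
    ∀ ε : ℝ, 0 < ε → ∃ c : ℝ, 0 < c ∧ ∀ X ∈ B,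
      μ {ω | c ≤ X ω} < ENNReal.ofReal ε := by
  intro ε hε
  by_contra hcon
  push_neg at hcon
  -- choose a sequence witnessing unboundedness
  have hch : ∀ n : ℕ, ∃ Z, Z ∈ B ∧ ENNReal.ofReal ε ≤ μ {ω | ((n : ℝ) + 1) ^ 2 ≤ Z ω} := by
    intro n
    obtain ⟨Z, hZB, hZ⟩ := hcon (((n : ℝ) + 1) ^ 2) (by positivity)
    exact ⟨Z, hZB, hZ⟩
  choose Xs hXsB hXs using hch
  obtain ⟨φ, hφ, X, hXpos, hT⟩ := hBS Xs hXsB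
  set S : ℕ → Ω → ℝ :=
    fun k ω => (∑ l ∈ Finset.range (k + 1), Xs (φ l) ω) / (k + 1 : ℝ) with hSdef
  have hSmeas : ∀ k, AEMeasurable (S k) μ := fun k =>
    ((Finset.measurable_sum _ fun l _ => hmeas _ (hXsB (φ l))).div_const _).aemeasurable
  have hXmeas : AEMeasurable X μ := hT.aemeasurable hSmeas
  set Y := hXmeas.mk X with hYdef
  have hYmeas : Measurable Y := hXmeas.measurable_mk
  have hXY : X =ᵐ[μ] Y := hXmeas.ae_eq_mk
  have hae : ∀ᵐ ω ∂μ, (∀ n, 0 ≤ Xs n ω) ∧ X ω = Y ω := by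
    filter_upwards [ae_all_iff.mpr fun n => hpos _ (hXsB n), hXY] with ω h1 h2
    exact ⟨h1, h2⟩
  set D : ℕ → Set Ω := fun k => {ω | 1 ≤ dist (S k ω) (X ω)} with hDdef
  set E : ℕ → Set Ω := fun k => {ω | (k : ℝ) ≤ Y ω} with hEdef
  have hkey : ∀ k, ENNReal.ofReal ε ≤ μ (D k) + μ (E k) := by
    intro k
    have hk1 : (0 : ℝ) < (k : ℝ) + 1 := by positivity
    have hsub : {ω | (∀ n, 0 ≤ Xs n ω) ∧ X ω = Y ω} ∩
        {ω | ((φ k : ℝ) + 1) ^ 2 ≤ Xs (φ k) ω} ⊆ D k ∪ E k := by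
      rintro ω ⟨⟨hnn, hxy⟩, hA⟩
      have hφk : (k : ℝ) + 1 ≤ (φ k : ℝ) + 1 := by
        have := hφ.le_apply (x := k)
        exact_mod_cast Nat.succ_le_succ this
      have hsum : ((φ k : ℝ) + 1) ^ 2 ≤ ∑ l ∈ Finset.range (k + 1), Xs (φ l) ω := by
        refine le_trans hA ?_
        exact Finset.single_le_sum (f := fun l => Xs (φ l) ω)
          (fun l _ => hnn (φ l)) (Finset.self_mem_range_succ k)
      have hSk : (k : ℝ) + 1 ≤ S k ω := by
        rw [hSdef]
        rw [le_div_iff₀ hk1]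
        nlinarith [hsum, hφk, hk1]
      by_cases hd : 1 ≤ dist (S k ω) (X ω)
      · exact Or.inl hd
      · right
        push_neg at hd
        rw [Real.dist_eq, abs_lt] at hd
        have hX : (k : ℝ) < X ω := by linarith [hd.1]
        simp only [hEdef, Set.mem_setOf_eq]
        rw [← hxy]
        exact hX.le
    have h0 : μ {ω | ¬((∀ n, 0 ≤ Xs n ω) ∧ X ω = Y ω)} = 0 := hae
    calc ENNReal.ofReal ε ≤ μ {ω | ((φ k : ℝ) + 1) ^ 2 ≤ Xs (φ k) ω} := hXs (φ k)
      _ ≤ μ ((D k ∪ E k) ∪ {ω | ¬((∀ n, 0 ≤ Xs n ω) ∧ X ω = Y ω)}) := by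
          refine measure_mono fun ω hω => ?_
          by_cases hg : (∀ n, 0 ≤ Xs n ω) ∧ X ω = Y ω
          · exact Or.inl (hsub ⟨hg, hω⟩)
          · exact Or.inr hg
      _ ≤ μ (D k ∪ E k) + μ {ω | ¬((∀ n, 0 ≤ Xs n ω) ∧ X ω = Y ω)} := measure_union_le _ _
      _ = μ (D k ∪ E k) := by rw [h0, add_zero]
      _ ≤ μ (D k) + μ (E k) := measure_union_le _ _
  have hD : Tendsto (fun k => μ (D k)) atTop (𝓝 0) := by
    have := hT 1 one_pos
    simp only [edist_dist, ENNReal.one_le_ofReal] at this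
    exact this
  have hE : Tendsto (fun k => μ (E k)) atTop (𝓝 0) := by
    have hiInter : (⋂ k, E k) = ∅ := by
      ext ω
      simp only [Set.mem_iInter, Set.mem_empty_iff_false, iff_false, not_forall, hEdef,
        Set.mem_setOf_eq, not_le]
      obtain ⟨k, hk⟩ := exists_nat_gt (Y ω)
      exact ⟨k, hk⟩
    have := tendsto_measure_iInter_atTop
      (s := E) (μ := μ)
      (fun k => (hYmeas measurableSet_Ici).nullMeasurableSet)
      (fun i j hij ω hω => le_trans (Nat.cast_le.mpr hij : (i:ℝ) ≤ j) hω)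
      ⟨0, measure_ne_top μ _⟩
    rw [hiInter] at this
    simpa [Function.comp_def] using this
  have hsum0 : Tendsto (fun k => μ (D k) + μ (E k)) atTop (𝓝 0) := by
    simpa using hD.add hE
  have hle : ENNReal.ofReal ε ≤ 0 := ge_of_tendsto' hsum0 hkey
  exact absurd hle (ENNReal.ofReal_pos.mpr hε).not_ge
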